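/- Let a > −1, b > −1, c > max{0, a−b} be real numbers and d ∈ {0, 1}. With the recurrence coefficients β_n^{(d)}, α_n^{(d)}, γ_n^{(d)} defined as in the recurrence relation for P_n^{(d)}(·; a, b, c), the following limits hold as m → ∞: β_{2m+d}^{(d)}(a,b,c)/m → 28/9, β_{2m+d}^{(1−d)}(a,b,c)/m → 20/9, α_{2m+d}^{(d)}(a,b,c)/m² → 208/81, γ_{2m+d}^{(d)}(a,b,c)/m³ → 64/729, and γ_{2m+d}^{(1−d)}(a,b,c)/m³ → 64/27. (The recurrence coefficients are unbounded and asymptotically 2-periodic.) -/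

import Mathlib

/-- Pochhammer symbol `(z)_k = z (z+1) ⋯ (z+k-1)`. -/
noncomputable def poch (z : ℝ) (k : ℕ) : ℝ := ∏ i ∈ Finset.range k, (z + i)

/-- The monic type II multiple orthogonal polynomial on the step line:
`P_n^{(d)}(x; a, b, c) = Σ_{j=0}^n (−1)^{n−j} C(n,j)
  ((a+1+j)_{n−j}(b+1+j)_{n−j}/(c+b+1+⌊(n+d)/2⌋+j)_{n−j}) x^j`. -/
noncomputable def Ptype2 (d : ℕ) (a b c : ℝ) (n : ℕ) (x : ℝ) : ℝ :=
  ∑ j ∈ Finset.range (n + 1),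
    (-1 : ℝ) ^ (n - j) * (n.choose j : ℝ) *
      (poch (a + 1 + j) (n - j) * poch (b + 1 + j) (n - j) /
        poch (c + b + 1 + (((n + d) / 2 : ℕ) : ℝ) + j) (n - j)) * x ^ j
/-- β coefficient `β_{2m+e}^{(e)}(a,b,c)` (superscript matching the parity of the index). -/
noncomputable def betaSame (a b c m e : ℝ) : ℝ :=
  (2*m+e+1)*(a+2*m+e+1)*(b+2*m+e+1)/(c+b+3*m+2*e+1)
    - (2*m+e)*(a+2*m+e)*(b+2*m+e)/(c+b+3*m+2*e)

/-- β coefficient `β_{2m+e}^{(1−e)}(a,b,c)`. -/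
noncomputable def betaDiff (a b c m e : ℝ) : ℝ :=
  (2*m+e+1)*(a+2*m+e+1)*(b+2*m+e+1)/(c+b+3*m+e+2)
    - (2*m+e)*(a+2*m+e)*(b+2*m+e)/(c+b+3*m+e)

/-- The recurrence coefficient `β_n^{(d)}(a,b,c)`, writing `n = 2m+e` with `e ∈ {0,1}`. -/
noncomputable def betaC (d : ℕ) (a b c : ℝ) (n : ℕ) : ℝ :=
  if n % 2 = d % 2 then betaSame a b c (n / 2) (n % 2) else betaDiff a b c (n / 2) (n % 2)

/-- α coefficient `α_{2m+e}^{(e)}(a,b,c)`. -/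
noncomputable def alphaSame (a b c m e : ℝ) : ℝ :=
  ((2*m+e)*(a+2*m+e)*(b+2*m+e)/(c+b+3*m+2*e)) *
    ((2*m+e-1)*(a+2*m+e-1)*(b+2*m+e-1)/(2*(c+b+3*m+2*e-1))
      - (2*m+e)*(a+2*m+e)*(b+2*m+e)/(c+b+3*m+2*e)
      + (2*m+e+1)*(a+2*m+e+1)*(b+2*m+e+1)/(2*(c+b+3*m+2*e+1)))

/-- The recurrence coefficient `α_n^{(d)}(a,b,c)`, writing `n = 2m+e` with `e ∈ {0,1}`;
`α_{2m+e}^{(1−e)}(a,b,c) = α_{2m+e}^{(e)}(a,b,c−e)`. -/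
noncomputable def alphaC (d : ℕ) (a b c : ℝ) (n : ℕ) : ℝ :=
  if n % 2 = d % 2 then alphaSame a b c (n / 2) (n % 2)
  else alphaSame a b (c - (n % 2)) (n / 2) (n % 2)

/-- γ coefficient `γ_{2m+e}^{(e)}(a,b,c)`. -/
noncomputable def gammaSame (a b c m e : ℝ) : ℝ :=
  poch (2*m+e) 2 * poch (a+2*m+e) 2 * poch (b+2*m+e) 2 *
    ((c+m+e)*(c+b-a+m+e)*(c+b+m+e)) /
    (poch (c+b+3*m-1+2*e) 3 * poch (c+b+3*m+2*e) 3)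

/-- γ coefficient `γ_{2m+e}^{(1−e)}(a,b,c)`. -/
noncomputable def gammaDiff (a b c m e : ℝ) : ℝ :=
  poch (2*m+e) 2 * poch (a+2*m+e) 2 * poch (b+2*m+e) 2 / poch (c+b+3*m+e) 3

/-- The recurrence coefficient `γ_n^{(d)}(a,b,c)`, writing `n = 2m+e` with `e ∈ {0,1}`. -/
noncomputable def gammaC (d : ℕ) (a b c : ℝ) (n : ℕ) : ℝ :=
  if n % 2 = d % 2 then gammaSame a b c (n / 2) (n % 2) else gammaDiff a b c (n / 2) (n % 2)

open Filter

lemma poch_two (z : ℝ) : poch z 2 = z*(z+1) := by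
  simp [poch, Finset.prod_range_succ]

lemma poch_three (z : ℝ) : poch z 3 = z*(z+1)*(z+2) := by
  norm_num [poch, Finset.prod_range_succ]

lemma tendsto_comp_inv {F : ℝ → ℝ} (hF : ContinuousAt F 0) :
    Tendsto (fun m : ℕ => F ((m:ℝ)⁻¹)) atTop (nhds (F 0)) :=
  hF.tendsto.comp (tendsto_inv_atTop_zero.comp tendsto_natCast_atTop_atTop)

lemma lim_lin (x k : ℝ) :
    Tendsto (fun m : ℕ => (x + k*(m:ℝ))/(m:ℝ)) atTop (nhds k) := by
  have h := tendsto_comp_inv (F := fun u : ℝ => k + x*u) (by fun_prop)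
  norm_num at h
  apply h.congr'
  filter_upwards [eventually_ne_atTop 0] with m hm
  have hm' : (m:ℝ) ≠ 0 := Nat.cast_ne_zero.mpr hm
  field_simp
  ring

lemma lim_cubic (p q r s : ℝ) :
    Tendsto (fun m : ℕ => (p*(m:ℝ)^3 + q*(m:ℝ)^2 + r*(m:ℝ) + s)/(m:ℝ)^3)
      atTop (nhds p) := by
  have h := tendsto_comp_inv (F := fun u : ℝ => p + q*u + r*u^2 + s*u^3) (by fun_prop)
  norm_num at h
  apply h.congr'
  filter_upwards [eventually_ne_atTop 0] with m hm
  have hm' : (m:ℝ) ≠ 0 := Nat.cast_ne_zero.mpr hm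
  field_simp


lemma alpha_helper (x y z P tm t0 t1 M : ℝ) (hM : M ≠ 0) (htm : tm ≠ 0)
    (ht0 : t0 ≠ 0) (ht1 : t1 ≠ 0) :
    (x/M * (y/M) * (z/M)) / (t0/M) * ((P/M^3) / (2*((tm/M)*(t0/M)*(t1/M))))
      = x*y*z/t0 * ((2*P)/(2*tm*t0*(2*t1))) / M^2 := by
  field_simp

lemma gamma_helper9 (s1 s2 s3 s4 s5 s6 s7 s8 s9 t1 t2 t3 t4 t5 t6 M : ℝ)
    (hM : M ≠ 0) (h1 : t1 ≠ 0) (h2 : t2 ≠ 0) (h3 : t3 ≠ 0) (h4 : t4 ≠ 0)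
    (h5 : t5 ≠ 0) (h6 : t6 ≠ 0) :
    (s1/M*(s2/M)*(s3/M)*(s4/M)*(s5/M)*(s6/M)*(s7/M)*(s8/M)*(s9/M))
        / ((t1/M)*(t2/M)*(t3/M)*(t4/M)*(t5/M)*(t6/M))
      = s1*s2*(s3*s4)*(s5*s6)*(s7*s8*s9)/(t1*t2*t3*(t4*t5*t6))/M^3 := by
  field_simp

lemma gamma_helper6 (s1 s2 s3 s4 s5 s6 t1 t2 t3 M : ℝ)
    (hM : M ≠ 0) (h1 : t1 ≠ 0) (h2 : t2 ≠ 0) (h3 : t3 ≠ 0) :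
    (s1/M*(s2/M)*(s3/M)*(s4/M)*(s5/M)*(s6/M)) / ((t1/M)*(t2/M)*(t3/M))
      = s1*s2*(s3*s4)*(s5*s6)/(t1*t2*t3)/M^3 := by
  field_simp

lemma lim_betaSame (a b c e : ℝ) :
    Tendsto (fun m : ℕ => betaSame a b c m e / m) atTop (nhds (28/9)) := by
  have hN := lim_cubic 28 (18+48*e+12*c+20*b+8*a)
    (3+21*e+27*e^2+6*c+12*c*e+9*b+22*b*e+4*b*c+4*b^2+3*a+10*a*e+4*a*c+5*a*b)
    (2*e+6*e^2+5*e^3+c+3*c*e+3*c*e^2+b+5*b*e+6*b*e^2+b*c+2*b*c*e+b^2+2*b^2*e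
      +2*a*e+3*a*e^2+a*c+2*a*c*e+a*b+3*a*b*e+a*b*c+a*b^2)
  have hG1 : Tendsto (fun m : ℕ => (c+b+3*(m:ℝ)+2*e+1)/(m:ℝ)) atTop (nhds 3) :=
    (lim_lin (c+b+2*e+1) 3).congr (fun m => by ring)
  have hG0 : Tendsto (fun m : ℕ => (c+b+3*(m:ℝ)+2*e)/(m:ℝ)) atTop (nhds 3) :=
    (lim_lin (c+b+2*e) 3).congr (fun m => by ring)
  have hq := hN.div (hG1.mul hG0) (by norm_num)
  rw [show (28:ℝ)/9 = 28/(3*3) by norm_num]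
  apply hq.congr'
  filter_upwards [tendsto_natCast_atTop_atTop.eventually_gt_atTop
    (|b|+|c|+2*|e|+2)] with m hm'
  have nb := abs_nonneg b; have nc := abs_nonneg c; have ne' := abs_nonneg e
  have pb := neg_abs_le b; have pc := neg_abs_le c; have pe := neg_abs_le e
  have hD1 : c+b+3*(m:ℝ)+2*e+1 ≠ 0 := by
    have : (0:ℝ) < c+b+3*(m:ℝ)+2*e+1 := by linarith
    exact this.ne'
  have hD0 : c+b+3*(m:ℝ)+2*e ≠ 0 := by
    have : (0:ℝ) < c+b+3*(m:ℝ)+2*e := by linarith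
    exact this.ne'
  have hm0 : (m:ℝ) ≠ 0 := by
    have : (0:ℝ) < m := by linarith
    exact this.ne'
  simp only [betaSame]
  set t1 := c+b+3*(m:ℝ)+2*e+1
  set t0 := c+b+3*(m:ℝ)+2*e
  simp only [Pi.div_apply, t1, t0] at hD1 hD0 ⊢
  rw [div_sub_div _ _ hD1 hD0]
  field_simp
  ring

lemma lim_betaDiff (a b c e : ℝ) :
    Tendsto (fun m : ℕ => betaDiff a b c m e / m) atTop (nhds (20/9)) := by
  have hN := lim_cubic 20 (18+24*e+12*c+16*b+4*a)
    (3+15*e+9*e^2+6*c+12*c*e+9*b+14*b*e+4*b*c+4*b^2+3*a+2*a*e+4*a*c+3*a*b)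
    (e+3*e^2+e^3+c+3*c*e+3*c*e^2+b+4*b*e+3*b*e^2+b*c+2*b*c*e+b^2+2*b^2*e
      +a*e+a*c+2*a*c*e+a*b+a*b*e+a*b*c+a*b^2)
  have hG2 : Tendsto (fun m : ℕ => (c+b+3*(m:ℝ)+e+2)/(m:ℝ)) atTop (nhds 3) :=
    (lim_lin (c+b+e+2) 3).congr (fun m => by ring)
  have hG0 : Tendsto (fun m : ℕ => (c+b+3*(m:ℝ)+e)/(m:ℝ)) atTop (nhds 3) :=
    (lim_lin (c+b+e) 3).congr (fun m => by ring)
  have hq := hN.div (hG2.mul hG0) (by norm_num)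
  rw [show (20:ℝ)/9 = 20/(3*3) by norm_num]
  apply hq.congr'
  filter_upwards [tendsto_natCast_atTop_atTop.eventually_gt_atTop
    (|b|+|c|+2*|e|+2)] with m hm'
  have nb := abs_nonneg b; have nc := abs_nonneg c; have ne' := abs_nonneg e
  have pb := neg_abs_le b; have pc := neg_abs_le c; have pe := neg_abs_le e
  have hD2 : c+b+3*(m:ℝ)+e+2 ≠ 0 := by
    have : (0:ℝ) < c+b+3*(m:ℝ)+e+2 := by linarith
    exact this.ne'
  have hD0 : c+b+3*(m:ℝ)+e ≠ 0 := by
    have : (0:ℝ) < c+b+3*(m:ℝ)+e := by linarith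
    exact this.ne'
  have hm0 : (m:ℝ) ≠ 0 := by
    have : (0:ℝ) < m := by linarith
    exact this.ne'
  simp only [betaDiff]
  set t2 := c+b+3*(m:ℝ)+e+2
  set t0 := c+b+3*(m:ℝ)+e
  simp only [Pi.div_apply, t2, t0] at hD2 hD0 ⊢
  rw [div_sub_div _ _ hD2 hD0]
  field_simp
  ring

set_option maxHeartbeats 1000000 in
lemma lim_alphaSame (a b c e : ℝ) :
    Tendsto (fun m : ℕ => alphaSame a b c m e / (m:ℝ)^2) atTop (nhds (208/81)) := by
  have h1 : Tendsto (fun m : ℕ => (2*(m:ℝ)+e)/(m:ℝ)) atTop (nhds 2) :=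
    (lim_lin e 2).congr (fun m => by ring)
  have h2 : Tendsto (fun m : ℕ => (a+2*(m:ℝ)+e)/(m:ℝ)) atTop (nhds 2) :=
    (lim_lin (a+e) 2).congr (fun m => by ring)
  have h3 : Tendsto (fun m : ℕ => (b+2*(m:ℝ)+e)/(m:ℝ)) atTop (nhds 2) :=
    (lim_lin (b+e) 2).congr (fun m => by ring)
  have hgm : Tendsto (fun m : ℕ => (c+b+3*(m:ℝ)+2*e-1)/(m:ℝ)) atTop (nhds 3) :=
    (lim_lin (c+b+2*e-1) 3).congr (fun m => by ring)
  have hg0 : Tendsto (fun m : ℕ => (c+b+3*(m:ℝ)+2*e)/(m:ℝ)) atTop (nhds 3) :=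
    (lim_lin (c+b+2*e) 3).congr (fun m => by ring)
  have hg1 : Tendsto (fun m : ℕ => (c+b+3*(m:ℝ)+2*e+1)/(m:ℝ)) atTop (nhds 3) :=
    (lim_lin (c+b+2*e+1) 3).congr (fun m => by ring)
  have hM := lim_cubic 52 (102*e+48*c+50*b+2*a)
    (-6+66*e^2+60*c*e+12*c^2+64*b*e+28*b*c+16*b^2+4*a*e+4*a*c+2*a*b)
    (-4*e+14*e^3-2*c+18*c*e^2+6*c^2*e-2*b+20*b*e^2+16*b*c*e+2*b*c^2+10*b^2*e
      +4*b^2*c+2*b^3+2*a*e^2+4*a*c*e+2*a*c^2+2*a*b*e+2*a*b*c)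
  have hd2 := (((hgm.mul hg0).mul hg1).const_mul (2:ℝ))
  have hq := (((h1.mul h2).mul h3).div hg0 (by norm_num)).mul
    (hM.div hd2 (by norm_num))
  rw [show (208:ℝ)/81 = 2*2*2/3 * (52/(2*(3*3*3))) by norm_num]
  apply hq.congr'
  filter_upwards [tendsto_natCast_atTop_atTop.eventually_gt_atTop
    (|b|+|c|+2*|e|+2)] with m hm'
  have nb := abs_nonneg b; have nc := abs_nonneg c; have ne' := abs_nonneg e
  have pb := neg_abs_le b; have pc := neg_abs_le c; have pe := neg_abs_le e
  have hgm' : (0:ℝ) < c+b+3*(m:ℝ)+2*e-1 := by linarith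
  have hg0' : c+b+3*(m:ℝ)+2*e ≠ 0 := by
    have : (0:ℝ) < c+b+3*(m:ℝ)+2*e := by linarith
    exact this.ne'
  have hg1' : (0:ℝ) < c+b+3*(m:ℝ)+2*e+1 := by linarith
  have hgm'' : c+b+3*(m:ℝ)+2*e-1 ≠ 0 := hgm'.ne'
  have hg1'' : c+b+3*(m:ℝ)+2*e+1 ≠ 0 := hg1'.ne'
  have h2gm : 2*(c+b+3*(m:ℝ)+2*e-1) ≠ 0 := mul_ne_zero (by norm_num) hgm''
  have h2g1 : 2*(c+b+3*(m:ℝ)+2*e+1) ≠ 0 := mul_ne_zero (by norm_num) hg1''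
  have hm0 : (m:ℝ) ≠ 0 := by
    have : (0:ℝ) < m := by linarith
    exact this.ne'
  simp only [Pi.div_apply, alphaSame]
  rw [div_sub_div _ _ h2gm hg0', div_add_div _ _ (mul_ne_zero h2gm hg0') h2g1,
    alpha_helper _ _ _ _ _ _ _ _ hm0 hgm'' (by exact hg0') hg1'',
    show ((2*(m:ℝ)+e-1)*(a+2*(m:ℝ)+e-1)*(b+2*(m:ℝ)+e-1)*(c+b+3*(m:ℝ)+2*e)
        - 2*(c+b+3*(m:ℝ)+2*e-1)*((2*(m:ℝ)+e)*(a+2*(m:ℝ)+e)*(b+2*(m:ℝ)+e)))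
          *(2*(c+b+3*(m:ℝ)+2*e+1))
        + 2*(c+b+3*(m:ℝ)+2*e-1)*(c+b+3*(m:ℝ)+2*e)
          *((2*(m:ℝ)+e+1)*(a+2*(m:ℝ)+e+1)*(b+2*(m:ℝ)+e+1))
      = 2*(52*(m:ℝ)^3 + (102*e+48*c+50*b+2*a)*(m:ℝ)^2
        + (-6+66*e^2+60*c*e+12*c^2+64*b*e+28*b*c+16*b^2+4*a*e+4*a*c+2*a*b)*(m:ℝ)
        + (-4*e+14*e^3-2*c+18*c*e^2+6*c^2*e-2*b+20*b*e^2+16*b*c*e+2*b*c^2+10*b^2*e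
          +4*b^2*c+2*b^3+2*a*e^2+4*a*c*e+2*a*c^2+2*a*b*e+2*a*b*c)) from by ring]

lemma lim_gammaSame (a b c e : ℝ) :
    Tendsto (fun m : ℕ => gammaSame a b c m e / (m:ℝ)^3) atTop (nhds (64/729)) := by
  have h1 : Tendsto (fun m : ℕ => (2*(m:ℝ)+e)/(m:ℝ)) atTop (nhds 2) :=
    (lim_lin e 2).congr (fun m => by ring)
  have h2 : Tendsto (fun m : ℕ => (2*(m:ℝ)+e+1)/(m:ℝ)) atTop (nhds 2) :=
    (lim_lin (e+1) 2).congr (fun m => by ring)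
  have h3 : Tendsto (fun m : ℕ => (a+2*(m:ℝ)+e)/(m:ℝ)) atTop (nhds 2) :=
    (lim_lin (a+e) 2).congr (fun m => by ring)
  have h4 : Tendsto (fun m : ℕ => (a+2*(m:ℝ)+e+1)/(m:ℝ)) atTop (nhds 2) :=
    (lim_lin (a+e+1) 2).congr (fun m => by ring)
  have h5 : Tendsto (fun m : ℕ => (b+2*(m:ℝ)+e)/(m:ℝ)) atTop (nhds 2) :=
    (lim_lin (b+e) 2).congr (fun m => by ring)
  have h6 : Tendsto (fun m : ℕ => (b+2*(m:ℝ)+e+1)/(m:ℝ)) atTop (nhds 2) :=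
    (lim_lin (b+e+1) 2).congr (fun m => by ring)
  have h7 : Tendsto (fun m : ℕ => (c+(m:ℝ)+e)/(m:ℝ)) atTop (nhds 1) :=
    (lim_lin (c+e) 1).congr (fun m => by ring)
  have h8 : Tendsto (fun m : ℕ => (c+b-a+(m:ℝ)+e)/(m:ℝ)) atTop (nhds 1) :=
    (lim_lin (c+b-a+e) 1).congr (fun m => by ring)
  have h9 : Tendsto (fun m : ℕ => (c+b+(m:ℝ)+e)/(m:ℝ)) atTop (nhds 1) :=
    (lim_lin (c+b+e) 1).congr (fun m => by ring)
  have g1 : Tendsto (fun m : ℕ => (c+b+3*(m:ℝ)-1+2*e)/(m:ℝ)) atTop (nhds 3) :=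
    (lim_lin (c+b-1+2*e) 3).congr (fun m => by ring)
  have g2 : Tendsto (fun m : ℕ => (c+b+3*(m:ℝ)-1+2*e+1)/(m:ℝ)) atTop (nhds 3) :=
    (lim_lin (c+b+2*e) 3).congr (fun m => by ring)
  have g3 : Tendsto (fun m : ℕ => (c+b+3*(m:ℝ)-1+2*e+2)/(m:ℝ)) atTop (nhds 3) :=
    (lim_lin (c+b+1+2*e) 3).congr (fun m => by ring)
  have g4 : Tendsto (fun m : ℕ => (c+b+3*(m:ℝ)+2*e)/(m:ℝ)) atTop (nhds 3) :=
    (lim_lin (c+b+2*e) 3).congr (fun m => by ring)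
  have g5 : Tendsto (fun m : ℕ => (c+b+3*(m:ℝ)+2*e+1)/(m:ℝ)) atTop (nhds 3) :=
    (lim_lin (c+b+2*e+1) 3).congr (fun m => by ring)
  have g6 : Tendsto (fun m : ℕ => (c+b+3*(m:ℝ)+2*e+2)/(m:ℝ)) atTop (nhds 3) :=
    (lim_lin (c+b+2*e+2) 3).congr (fun m => by ring)
  have hq := ((((((((h1.mul h2).mul h3).mul h4).mul h5).mul h6).mul h7).mul h8).mul
    h9).div (((((g1.mul g2).mul g3).mul g4).mul g5).mul g6) (by norm_num)
  rw [show (64:ℝ)/729 = 2*2*2*2*2*2*1*1*1/(3*3*3*3*3*3) by norm_num]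
  apply hq.congr'
  filter_upwards [tendsto_natCast_atTop_atTop.eventually_gt_atTop
    (|b|+|c|+2*|e|+2)] with m hm'
  have nb := abs_nonneg b; have nc := abs_nonneg c; have ne' := abs_nonneg e
  have pb := neg_abs_le b; have pc := neg_abs_le c; have pe := neg_abs_le e
  have k1 : c+b+3*(m:ℝ)-1+2*e ≠ 0 := by
    have : (0:ℝ) < c+b+3*(m:ℝ)-1+2*e := by linarith
    exact this.ne'
  have k2 : c+b+3*(m:ℝ)-1+2*e+1 ≠ 0 := by
    have : (0:ℝ) < c+b+3*(m:ℝ)-1+2*e+1 := by linarith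
    exact this.ne'
  have k3 : c+b+3*(m:ℝ)-1+2*e+2 ≠ 0 := by
    have : (0:ℝ) < c+b+3*(m:ℝ)-1+2*e+2 := by linarith
    exact this.ne'
  have k4 : c+b+3*(m:ℝ)+2*e ≠ 0 := by
    have : (0:ℝ) < c+b+3*(m:ℝ)+2*e := by linarith
    exact this.ne'
  have k5 : c+b+3*(m:ℝ)+2*e+1 ≠ 0 := by
    have : (0:ℝ) < c+b+3*(m:ℝ)+2*e+1 := by linarith
    exact this.ne'
  have k6 : c+b+3*(m:ℝ)+2*e+2 ≠ 0 := by
    have : (0:ℝ) < c+b+3*(m:ℝ)+2*e+2 := by linarith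
    exact this.ne'
  have hm0 : (m:ℝ) ≠ 0 := by
    have : (0:ℝ) < m := by linarith
    exact this.ne'
  simp only [gammaSame, poch_two, poch_three]
  simp only [Pi.div_apply]
  rw [gamma_helper9 _ _ _ _ _ _ _ _ _ _ _ _ _ _ _ _ hm0 k1 k2 k3 k4 k5 k6]

lemma lim_gammaDiff (a b c e : ℝ) :
    Tendsto (fun m : ℕ => gammaDiff a b c m e / (m:ℝ)^3) atTop (nhds (64/27)) := by
  have h1 : Tendsto (fun m : ℕ => (2*(m:ℝ)+e)/(m:ℝ)) atTop (nhds 2) :=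
    (lim_lin e 2).congr (fun m => by ring)
  have h2 : Tendsto (fun m : ℕ => (2*(m:ℝ)+e+1)/(m:ℝ)) atTop (nhds 2) :=
    (lim_lin (e+1) 2).congr (fun m => by ring)
  have h3 : Tendsto (fun m : ℕ => (a+2*(m:ℝ)+e)/(m:ℝ)) atTop (nhds 2) :=
    (lim_lin (a+e) 2).congr (fun m => by ring)
  have h4 : Tendsto (fun m : ℕ => (a+2*(m:ℝ)+e+1)/(m:ℝ)) atTop (nhds 2) :=
    (lim_lin (a+e+1) 2).congr (fun m => by ring)
  have h5 : Tendsto (fun m : ℕ => (b+2*(m:ℝ)+e)/(m:ℝ)) atTop (nhds 2) :=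
    (lim_lin (b+e) 2).congr (fun m => by ring)
  have h6 : Tendsto (fun m : ℕ => (b+2*(m:ℝ)+e+1)/(m:ℝ)) atTop (nhds 2) :=
    (lim_lin (b+e+1) 2).congr (fun m => by ring)
  have g1 : Tendsto (fun m : ℕ => (c+b+3*(m:ℝ)+e)/(m:ℝ)) atTop (nhds 3) :=
    (lim_lin (c+b+e) 3).congr (fun m => by ring)
  have g2 : Tendsto (fun m : ℕ => (c+b+3*(m:ℝ)+e+1)/(m:ℝ)) atTop (nhds 3) :=
    (lim_lin (c+b+e+1) 3).congr (fun m => by ring)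
  have g3 : Tendsto (fun m : ℕ => (c+b+3*(m:ℝ)+e+2)/(m:ℝ)) atTop (nhds 3) :=
    (lim_lin (c+b+e+2) 3).congr (fun m => by ring)
  have hq := (((((h1.mul h2).mul h3).mul h4).mul h5).mul h6).div
    ((g1.mul g2).mul g3) (by norm_num)
  rw [show (64:ℝ)/27 = 2*2*2*2*2*2/(3*3*3) by norm_num]
  apply hq.congr'
  filter_upwards [tendsto_natCast_atTop_atTop.eventually_gt_atTop
    (|b|+|c|+2*|e|+2)] with m hm'
  have nb := abs_nonneg b; have nc := abs_nonneg c; have ne' := abs_nonneg e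
  have pb := neg_abs_le b; have pc := neg_abs_le c; have pe := neg_abs_le e
  have k1 : c+b+3*(m:ℝ)+e ≠ 0 := by
    have : (0:ℝ) < c+b+3*(m:ℝ)+e := by linarith
    exact this.ne'
  have k2 : c+b+3*(m:ℝ)+e+1 ≠ 0 := by
    have : (0:ℝ) < c+b+3*(m:ℝ)+e+1 := by linarith
    exact this.ne'
  have k3 : c+b+3*(m:ℝ)+e+2 ≠ 0 := by
    have : (0:ℝ) < c+b+3*(m:ℝ)+e+2 := by linarith
    exact this.ne'
  have hm0 : (m:ℝ) ≠ 0 := by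
    have : (0:ℝ) < m := by linarith
    exact this.ne'
  simp only [gammaDiff, poch_two, poch_three]
  simp only [Pi.div_apply]
  rw [gamma_helper6 _ _ _ _ _ _ _ _ _ _ hm0 k1 k2 k3]

lemma real_mod_two (x : ℝ) : x % 2 = 0 :=
  EuclideanDomain.mod_eq_zero.mpr ⟨x/2, by ring⟩

lemma cast_div_two (d m : ℕ) : ((2*m+d : ℕ):ℝ) / 2 = (m:ℝ) + (d:ℝ)/2 := by
  push_cast; ring

lemma betaC_spec (d : ℕ) (hd : d ≤ 1) (a b c : ℝ) (m : ℕ) :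
    betaC d a b c (2*m+d) = betaSame a b (c - d/2) m d := by
  simp only [betaC]
  rw [if_pos (by omega : (2*m+d) % 2 = d % 2), real_mod_two, cast_div_two]
  simp only [betaSame]
  ring

lemma betaC_spec' (d : ℕ) (hd : d ≤ 1) (a b c : ℝ) (m : ℕ) :
    betaC (1-d) a b c (2*m+d) = betaDiff a b (c + d/2) m d := by
  simp only [betaC]
  rw [if_neg (by omega : ¬((2*m+d) % 2 = (1-d) % 2)), real_mod_two, cast_div_two]
  simp only [betaDiff]
  ring

lemma alphaC_spec (d : ℕ) (hd : d ≤ 1) (a b c : ℝ) (m : ℕ) :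
    alphaC d a b c (2*m+d) = alphaSame a b (c - d/2) m d := by
  simp only [alphaC]
  rw [if_pos (by omega : (2*m+d) % 2 = d % 2), real_mod_two, cast_div_two]
  simp only [alphaSame]
  ring

lemma gammaC_spec (d : ℕ) (hd : d ≤ 1) (a b c : ℝ) (m : ℕ) :
    gammaC d a b c (2*m+d) = gammaSame a b (c - d/2) m d := by
  simp only [gammaC]
  rw [if_pos (by omega : (2*m+d) % 2 = d % 2), real_mod_two, cast_div_two]
  simp only [gammaSame, poch_two, poch_three]
  ring

lemma gammaC_spec' (d : ℕ) (hd : d ≤ 1) (a b c : ℝ) (m : ℕ) :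
    gammaC (1-d) a b c (2*m+d) = gammaDiff a b (c + d/2) m d := by
  simp only [gammaC]
  rw [if_neg (by omega : ¬((2*m+d) % 2 = (1-d) % 2)), real_mod_two, cast_div_two]
  simp only [gammaDiff, poch_two, poch_three]
  ring

theorem recurrence_coefficients_asymptotics (a b c : ℝ) (ha : a > -1) (hb : b > -1)
    (hc : c > max 0 (a - b)) (d : ℕ) (hd : d ≤ 1) :
    Tendsto (fun m : ℕ => betaC d a b c (2 * m + d) / m) atTop (nhds (28 / 9)) ∧
    Tendsto (fun m : ℕ => betaC (1 - d) a b c (2 * m + d) / m) atTop (nhds (20 / 9)) ∧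
    Tendsto (fun m : ℕ => alphaC d a b c (2 * m + d) / (m : ℝ) ^ 2) atTop
      (nhds (208 / 81)) ∧
    Tendsto (fun m : ℕ => gammaC d a b c (2 * m + d) / (m : ℝ) ^ 3) atTop
      (nhds (64 / 729)) ∧
    Tendsto (fun m : ℕ => gammaC (1 - d) a b c (2 * m + d) / (m : ℝ) ^ 3) atTop
      (nhds (64 / 27)) := by
  refine ⟨?_, ?_, ?_, ?_, ?_⟩
  · exact (lim_betaSame a b (c - (d:ℝ)/2) d).congr fun m => by rw [betaC_spec d hd]
  · exact (lim_betaDiff a b (c + (d:ℝ)/2) d).congr fun m => by rw [betaC_spec' d hd]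
  · exact (lim_alphaSame a b (c - (d:ℝ)/2) d).congr fun m => by rw [alphaC_spec d hd]
  · exact (lim_gammaSame a b (c - (d:ℝ)/2) d).congr fun m => by rw [gammaC_spec d hd]
  · exact (lim_gammaDiff a b (c + (d:ℝ)/2) d).congr fun m => by rw [gammaC_spec' d hd]
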